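/- arXiv:1411.3926 — 3 statements merged into one kernel-verified Lean document; each statement's English description precedes it below -/
import Mathlib

section
/- For 0 ≤ k ≤ ⌊m/2⌋ and any harmonic homogeneous polynomial h of degree m - 2k on ℝ^n, the polynomial p = r^{2k} h satisfies A_α p = (α + 2k)(2m - 2k + α + n - 2) p, where A_α = r^2Δ + 2α r∂_r + α(α+n-2). -/
open MvPolynomial

noncomputable section

/-- The polynomial Laplacian `Δp = ∑ ∂²p/∂xᵢ²` on `ℝ^n`. -/
def pLap (n : ℕ) (p : MvPolynomial (Fin n) ℝ) : MvPolynomial (Fin n) ℝ :=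
  ∑ i : Fin n, pderiv i (pderiv i p)

/-- The polynomial `r² = |x|² = ∑ xᵢ²`. -/
def r2 (n : ℕ) : MvPolynomial (Fin n) ℝ := ∑ i : Fin n, X i ^ 2

/-- The radial derivative `r∂_r p = ∑ xᵢ ∂p/∂xᵢ`. -/
def prdr (n : ℕ) (p : MvPolynomial (Fin n) ℝ) : MvPolynomial (Fin n) ℝ :=
  ∑ i : Fin n, X i * pderiv i p

/-- The operator `A_α = r²Δ + 2α r∂_r + α(α+n-2)`. -/
def Apol (n : ℕ) (α : ℝ) (p : MvPolynomial (Fin n) ℝ) : MvPolynomial (Fin n) ℝ :=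
  r2 n * pLap n p + C (2 * α) * prdr n p + C (α * (α + (n : ℝ) - 2)) * p

/-- The operator `B_α = 2 r∂_r + (2α+n-2)`. -/
def Bpol (n : ℕ) (α : ℝ) (p : MvPolynomial (Fin n) ℝ) : MvPolynomial (Fin n) ℝ :=
  C 2 * prdr n p + C (2 * α + (n : ℝ) - 2) * p


lemma prdr_mono (n : ℕ) (s : Fin n →₀ ℕ) (a : ℝ) (i : Fin n) :
    X i * pderiv i (monomial s a) = (s i) • monomial s a := by
  rw [pderiv_monomial]
  rcases Nat.eq_zero_or_pos (s i) with h0 | hpos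
  · simp [h0]
  · rw [X, monomial_mul, add_tsub_cancel_of_le (by rwa [Finsupp.single_le_iff]),
      smul_monomial]
    congr 1
    simp [mul_comm]

lemma euler (n d : ℕ) (p : MvPolynomial (Fin n) ℝ) (hp : p.IsHomogeneous d) :
    prdr n p = C (d : ℝ) * p := by
  conv_lhs => rw [p.as_sum]
  conv_rhs => rw [p.as_sum, Finset.mul_sum]
  rw [prdr]
  simp_rw [map_sum, Finset.mul_sum]
  rw [Finset.sum_comm]
  refine Finset.sum_congr rfl fun s hs => ?_
  simp_rw [prdr_mono, ← Finset.sum_smul]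
  have hd : ∑ i : Fin n, s i = d := by
    have h1 := hp (mem_support_iff.mp hs)
    rw [show (Finsupp.weight 1 : (Fin n →₀ ℕ) →+ ℕ) = Finsupp.weight (fun _ => 1) from rfl,
      ← Finsupp.degree_eq_weight_one] at h1
    rw [← h1, Finsupp.degree_apply]
    exact (Finset.sum_subset (Finset.subset_univ _)
      (fun i _ hi => Finsupp.notMem_support_iff.mp hi)).symm
  rw [hd, ← Nat.cast_smul_eq_nsmul ℝ, smul_eq_C_mul]

lemma pderiv_r2 (n : ℕ) (i : Fin n) : pderiv i (r2 n) = C 2 * X i := by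
  rw [r2, map_sum]
  rw [Finset.sum_eq_single i (fun j _ hj => by simp [pderiv_pow, pderiv_X_of_ne hj])
    (fun hi => absurd (Finset.mem_univ i) hi)]
  rw [pderiv_pow, pderiv_X_self, mul_one, pow_one]
  have h2 : ((2:ℕ) : MvPolynomial (Fin n) ℝ) = C 2 := by push_cast; rw [map_ofNat]
  rw [h2]

lemma lap_r2_mul (n : ℕ) (q : MvPolynomial (Fin n) ℝ) :
    pLap n (r2 n * q) = C (2 * (n : ℝ)) * q + C 4 * prdr n q + r2 n * pLap n q := by
  have key : ∀ i : Fin n, pderiv i (pderiv i (r2 n * q)) =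
      C 2 * q + C 4 * (X i * pderiv i q) + r2 n * pderiv i (pderiv i q) := by
    intro i
    rw [pderiv_mul, pderiv_r2, map_add, pderiv_mul (f := C 2 * X i), pderiv_mul (f := r2 n),
      pderiv_r2, pderiv_C_mul, pderiv_X_self]
    have h4 : (C 4 : MvPolynomial (Fin n) ℝ) = C 2 * 2 := by
      rw [show (2 : MvPolynomial (Fin n) ℝ) = C 2 from (map_ofNat _ 2).symm, ← C_mul]; norm_num
    rw [h4]
    ring
  rw [pLap]
  simp_rw [key]
  rw [Finset.sum_add_distrib, Finset.sum_add_distrib, Finset.sum_const, Finset.card_univ,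
    Fintype.card_fin, ← Finset.mul_sum, ← Finset.mul_sum, ← prdr, ← pLap,
    ← Nat.cast_smul_eq_nsmul ℝ, smul_eq_C_mul, ← mul_assoc, ← C_mul, mul_comm (n : ℝ) 2]

lemma r2_hom (n : ℕ) : (r2 n).IsHomogeneous 2 :=
  IsHomogeneous.sum _ _ _ fun i _ => (isHomogeneous_X _ _).pow 2

lemma hom_r2pow_mul (n d k : ℕ) (h : MvPolynomial (Fin n) ℝ) (hhom : h.IsHomogeneous d) :
    (r2 n ^ k * h).IsHomogeneous (2 * k + d) :=
  ((r2_hom n).pow k).mul hhom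

lemma lap_key (n d : ℕ) (h : MvPolynomial (Fin n) ℝ) (hhom : h.IsHomogeneous d)
    (hharm : pLap n h = 0) : ∀ k : ℕ, pLap n (r2 n ^ (k + 1) * h) =
      C ((2 * (k : ℝ) + 2) * (2 * k + 2 * d + n)) * (r2 n ^ k * h) := by
  intro k
  induction k with
  | zero =>
    rw [pow_one, lap_r2_mul, hharm, euler n d h hhom, mul_zero, add_zero]
    have hC : C ((2 * ((0:ℕ) : ℝ) + 2) * (2 * ((0:ℕ):ℝ) + 2 * d + n))
        = (C (2 * (n:ℝ)) + C 4 * C (d:ℝ) : MvPolynomial (Fin n) ℝ) := by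
      rw [← C_mul, ← C_add, C_inj]; push_cast; ring
    rw [hC]
    ring
  | succ k ih =>
    have hmul : r2 n ^ (k + 1 + 1) * h = r2 n * (r2 n ^ (k + 1) * h) := by ring
    have hqhom := hom_r2pow_mul n d (k + 1) h hhom
    have heul := euler n (2 * (k + 1) + d) _ hqhom
    rw [hmul, lap_r2_mul, heul, ih]
    have hC : C ((2 * ((k:ℝ) + 1) + 2) * (2 * ((k:ℕ)+1:ℕ) + 2 * d + n))
        = (C (2 * (n:ℝ)) + C 4 * C ((2 * (k + 1) + d : ℕ) : ℝ)
          + C ((2 * (k : ℝ) + 2) * (2 * k + 2 * d + n)) : MvPolynomial (Fin n) ℝ) := by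
      rw [← C_mul, ← C_add, ← C_add, C_inj]; push_cast; ring
    push_cast at hC ⊢
    rw [hC]
    ring

/-- For `0 ≤ k ≤ ⌊m/2⌋` and any harmonic homogeneous polynomial `h` of degree
`m - 2k` on `ℝ^n`, the polynomial `p = r^{2k} h` satisfies
`A_α p = (α + 2k)(2m - 2k + α + n - 2) p`, where `A_α = r²Δ + 2α r∂_r + α(α+n-2)`. -/
theorem stmt6 (n m k : ℕ) (α : ℝ) (hk : 2 * k ≤ m) (h : MvPolynomial (Fin n) ℝ)
    (hhom : h.IsHomogeneous (m - 2 * k)) (hharm : pLap n h = 0) :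
    Apol n α (r2 n ^ k * h) =
      C ((α + 2 * (k : ℝ)) * (2 * (m : ℝ) - 2 * (k : ℝ) + α + (n : ℝ) - 2)) * (r2 n ^ k * h) := by
  have hd : ((m - 2 * k : ℕ) : ℝ) = (m : ℝ) - 2 * k := by push_cast [Nat.cast_sub hk]; ring
  cases k with
  | zero =>
    rw [Apol, pow_zero, one_mul, hharm, mul_zero, zero_add,
      euler n (m - 2 * 0) h hhom]
    have hC : C ((α + 2 * ((0:ℕ) : ℝ)) * (2 * (m : ℝ) - 2 * ((0:ℕ):ℝ) + α + (n : ℝ) - 2))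
        = (C (2 * α) * C ((m - 2 * 0 : ℕ) : ℝ)
          + C (α * (α + (n : ℝ) - 2)) : MvPolynomial (Fin n) ℝ) := by
      rw [← C_mul, ← C_add, C_inj]
      push_cast [Nat.sub_zero]
      ring
    push_cast [Nat.sub_zero] at hC ⊢
    rw [hC]
    ring
  | succ k =>
    have hhom' := hom_r2pow_mul n (m - 2 * (k + 1)) (k + 1) h hhom
    rw [Apol, lap_key n (m - 2 * (k + 1)) h hhom hharm k, euler _ _ _ hhom']
    have hC : C ((α + 2 * (((k:ℕ) + 1 : ℕ) : ℝ)) * (2 * (m : ℝ) - 2 * (((k:ℕ)+1:ℕ):ℝ) + α + (n : ℝ) - 2))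
        = (C ((2 * (k : ℝ) + 2) * (2 * k + 2 * ((m - 2 * (k+1) : ℕ) : ℝ) + n))
          + C (2 * α) * C ((2 * (k + 1) + (m - 2 * (k+1)) : ℕ) : ℝ)
          + C (α * (α + (n : ℝ) - 2)) : MvPolynomial (Fin n) ℝ) := by
      rw [← C_mul, ← C_add, ← C_add, C_inj]
      have hd' : ((m - 2 * (k + 1) : ℕ) : ℝ) = (m : ℝ) - 2 * (k + 1) := by
        push_cast [Nat.cast_sub hk]; ring
      push_cast [hd']
      ring
    push_cast [hd] at hC ⊢
    rw [hC]
    ring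
end
end

section
/- With W as an algebraic Weyl tensor on ℝ^n, the function F(x) = Σ_{k,l} (Σ_{i,j} W_{ikjl} x_i x_j)^2 satisfies Δ F(x) = 2 Σ_{j,k,l} (Σ_i W_{ijkl} x_i + Σ_i W_{ilkj} x_i)^2, where Δ is the Euclidean Laplacian. -/
set_option synthInstance.maxHeartbeats 1000000
set_option maxHeartbeats 2000000


noncomputable section

/-- The Euclidean Laplacian `Δf = ∑ ∂²f/∂xᵢ²` on `ℝ^n`. -/
def lap (n : ℕ) (f : EuclideanSpace ℝ (Fin n) → ℝ) (x : EuclideanSpace ℝ (Fin n)) : ℝ :=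
  ∑ i : Fin n, iteratedFDeriv ℝ 2 f x ![EuclideanSpace.single i 1, EuclideanSpace.single i 1]

/-- For an algebraic Weyl tensor `W` on `ℝ^n`, the polynomial
`F(x) = Σ_{k,l} (Σ_{i,j} W_{ikjl} x_i x_j)²` satisfies
`ΔF(x) = 2 Σ_{j,k,l} (Σ_i W_{ijkl} x_i + Σ_i W_{ilkj} x_i)²`. -/
theorem stmt12 (n : ℕ) (W : Fin n → Fin n → Fin n → Fin n → ℝ)
    (hA1 : ∀ i k j l, W i k j l = -W k i j l)
    (hA2 : ∀ i k j l, W i k j l = -W i k l j)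
    (hP : ∀ i k j l, W i k j l = W j l i k)
    (hB : ∀ i k j l, W i k j l + W i j l k + W i l k j = 0)
    (hT : ∀ k l, ∑ i : Fin n, W i k i l = 0) (x : EuclideanSpace ℝ (Fin n)) :
    lap n (fun y => ∑ k : Fin n, ∑ l : Fin n,
        (∑ i : Fin n, ∑ j : Fin n, W i k j l * y i * y j) ^ 2) x =
      2 * ∑ j : Fin n, ∑ k : Fin n, ∑ l : Fin n,
        ((∑ i : Fin n, W i j k l * x i) + (∑ i : Fin n, W i l k j * x i)) ^ 2 := by
  classical
  set g : Fin n → Fin n → EuclideanSpace ℝ (Fin n) → ℝ :=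
    fun k l y => ∑ i, ∑ j, W i k j l * y i * y j with hgdef
  set M : Fin n → Fin n → EuclideanSpace ℝ (Fin n) →L[ℝ] EuclideanSpace ℝ (Fin n) →L[ℝ] ℝ :=
    fun k l => ∑ i : Fin n, ∑ j : Fin n, W i k j l •
      ((EuclideanSpace.proj j).smulRight (EuclideanSpace.proj i) +
       (EuclideanSpace.proj i).smulRight (EuclideanSpace.proj j)) with hMdef
  have hMapp : ∀ k l (y v : EuclideanSpace ℝ (Fin n)), M k l y v
      = ∑ i, ∑ j, W i k j l * (y j * v i + y i * v j) := by
    intro k l y v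
    simp [hMdef, ContinuousLinearMap.sum_apply, PiLp.proj_apply, mul_add]
  have hg : ∀ k l (y : EuclideanSpace ℝ (Fin n)), HasFDerivAt (g k l) (M k l y) y := by
    intro k l y
    have h : HasFDerivAt (g k l)
        (∑ i : Fin n, ∑ j : Fin n, ((W i k j l * y i) • (EuclideanSpace.proj j)
          + y j • (W i k j l • (EuclideanSpace.proj i
              : EuclideanSpace ℝ (Fin n) →L[ℝ] ℝ)))) y := by
      apply HasFDerivAt.fun_sum; intro i _
      apply HasFDerivAt.fun_sum; intro j _
      have h1 : HasFDerivAt (fun y : EuclideanSpace ℝ (Fin n) => W i k j l * y i)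
          (W i k j l • (EuclideanSpace.proj i : EuclideanSpace ℝ (Fin n) →L[ℝ] ℝ)) y :=
        ((EuclideanSpace.proj i : EuclideanSpace ℝ (Fin n) →L[ℝ] ℝ).hasFDerivAt
          (x := y)).const_mul _
      have h2 : HasFDerivAt (fun y : EuclideanSpace ℝ (Fin n) => y j)
          (EuclideanSpace.proj j : EuclideanSpace ℝ (Fin n) →L[ℝ] ℝ) y :=
        (EuclideanSpace.proj j : EuclideanSpace ℝ (Fin n) →L[ℝ] ℝ).hasFDerivAt
      exact h1.mul h2
    convert h using 1
    ext v
    rw [hMapp]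
    simp [ContinuousLinearMap.sum_apply, PiLp.proj_apply]
    refine Finset.sum_congr rfl fun i _ => Finset.sum_congr rfl fun j _ => ?_
    ring
  -- first derivative of f
  set F1 : EuclideanSpace ℝ (Fin n) → (EuclideanSpace ℝ (Fin n) →L[ℝ] ℝ) :=
    fun y => ∑ k : Fin n, ∑ l : Fin n, (g k l y • M k l y + g k l y • M k l y) with hF1def
  have hf : ∀ y : EuclideanSpace ℝ (Fin n),
      HasFDerivAt (fun y : EuclideanSpace ℝ (Fin n) => ∑ k : Fin n, ∑ l : Fin n, (g k l y) ^ 2)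
        (F1 y) y := by
    intro y
    have h : HasFDerivAt
        (fun y : EuclideanSpace ℝ (Fin n) => ∑ k : Fin n, ∑ l : Fin n, g k l y * g k l y)
        (F1 y) y := by
      rw [hF1def]
      apply HasFDerivAt.fun_sum; intro k _
      apply HasFDerivAt.fun_sum; intro l _
      exact (hg k l y).mul (hg k l y)
    simpa [pow_two] using h
  -- second derivative
  set F2 : EuclideanSpace ℝ (Fin n) →L[ℝ] (EuclideanSpace ℝ (Fin n) →L[ℝ] ℝ) :=
    ∑ k : Fin n, ∑ l : Fin n,
      ((g k l x • M k l + (M k l x).smulRight (M k l x)) +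
       (g k l x • M k l + (M k l x).smulRight (M k l x))) with hF2def
  have hF1 : HasFDerivAt F1 F2 x := by
    rw [hF1def, hF2def]
    apply HasFDerivAt.fun_sum; intro k _
    apply HasFDerivAt.fun_sum; intro l _
    exact ((hg k l x).smul (M k l).hasFDerivAt).add ((hg k l x).smul (M k l).hasFDerivAt)
  -- evaluations
  have hMee : ∀ k l a : Fin n, M k l (EuclideanSpace.single a 1) (EuclideanSpace.single a 1)
      = 2 * W a k a l := by
    intro k l a
    rw [hMapp]
    simp [EuclideanSpace.single_apply, mul_add, mul_ite, ite_mul, Finset.sum_add_distrib,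
      Finset.sum_ite_eq, Finset.sum_ite_eq']
    ring
  have hMxe : ∀ k l a : Fin n, M k l x (EuclideanSpace.single a 1)
      = (∑ j, W a k j l * x j) + (∑ i, W i k a l * x i) := by
    intro k l a
    rw [hMapp]
    simp [EuclideanSpace.single_apply, mul_add, mul_ite, ite_mul, Finset.sum_add_distrib,
      Finset.sum_ite_eq, Finset.sum_ite_eq', mul_comm]
  -- laplacian
  have hfd : (fderiv ℝ (fun y : EuclideanSpace ℝ (Fin n) =>
      ∑ k : Fin n, ∑ l : Fin n, (g k l y) ^ 2)) = F1 :=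
    funext fun y => (hf y).fderiv
  have hlap : lap n (fun y => ∑ k : Fin n, ∑ l : Fin n, (g k l y) ^ 2) x
      = ∑ a : Fin n, F2 (EuclideanSpace.single a 1) (EuclideanSpace.single a 1) := by
    unfold lap
    refine Finset.sum_congr rfl fun a _ => ?_
    rw [iteratedFDeriv_two_apply, hfd, hF1.fderiv]
    simp
  -- algebra
  have hBsw : ∀ a k l : Fin n,
      (∑ j, W a k j l * x j) + (∑ i, W i k a l * x i)
        = (∑ i, W i l a k * x i) + (∑ i, W i k a l * x i) := by
    intro a k l
    congr 1
    exact Finset.sum_congr rfl fun j _ => by rw [hP a k j l]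
  have key : ∀ a : Fin n,
      F2 (EuclideanSpace.single a 1) (EuclideanSpace.single a 1)
        = ∑ k : Fin n, ∑ l : Fin n,
            ((4 * g k l x) * W a k a l
              + 2 * ((∑ i, W i l a k * x i) + (∑ i, W i k a l * x i)) ^ 2) := by
    intro a
    rw [hF2def]
    simp only [ContinuousLinearMap.sum_apply, ContinuousLinearMap.add_apply,
      ContinuousLinearMap.smul_apply, ContinuousLinearMap.smulRight_apply, smul_eq_mul]
    refine Finset.sum_congr rfl fun k _ => Finset.sum_congr rfl fun l _ => ?_
    rw [hMee k l a, hMxe k l a, hBsw a k l]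
    ring
  have hzero : ∑ a : Fin n, ∑ k : Fin n, ∑ l : Fin n, (4 * g k l x) * W a k a l = 0 := by
    rw [Finset.sum_comm]
    refine Finset.sum_eq_zero fun k _ => ?_
    rw [Finset.sum_comm]
    refine Finset.sum_eq_zero fun l _ => ?_
    rw [← Finset.mul_sum, hT k l, mul_zero]
  have hre : ∑ a : Fin n, ∑ k : Fin n, ∑ l : Fin n,
      2 * ((∑ i, W i l a k * x i) + (∑ i, W i k a l * x i)) ^ 2
      = ∑ j : Fin n, ∑ k : Fin n, ∑ l : Fin n,
        2 * ((∑ i : Fin n, W i j k l * x i) + (∑ i : Fin n, W i l k j * x i)) ^ 2 := by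
    rw [show (∑ a : Fin n, ∑ k : Fin n, ∑ l : Fin n,
        2 * ((∑ i, W i l a k * x i) + (∑ i, W i k a l * x i)) ^ 2)
      = ∑ a : Fin n, ∑ l : Fin n, ∑ k : Fin n,
        2 * ((∑ i, W i l a k * x i) + (∑ i, W i k a l * x i)) ^ 2 from
      Finset.sum_congr rfl fun a _ => Finset.sum_comm]
    exact Finset.sum_comm
  calc lap n (fun y => ∑ k : Fin n, ∑ l : Fin n,
        (∑ i : Fin n, ∑ j : Fin n, W i k j l * y i * y j) ^ 2) x
      = ∑ a : Fin n, F2 (EuclideanSpace.single a 1) (EuclideanSpace.single a 1) := hlap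
    _ = ∑ a : Fin n, ∑ k : Fin n, ∑ l : Fin n,
          ((4 * g k l x) * W a k a l
            + 2 * ((∑ i, W i l a k * x i) + (∑ i, W i k a l * x i)) ^ 2) := by
        exact Finset.sum_congr rfl fun a _ => key a
    _ = (∑ a : Fin n, ∑ k : Fin n, ∑ l : Fin n, (4 * g k l x) * W a k a l)
        + ∑ a : Fin n, ∑ k : Fin n, ∑ l : Fin n,
          2 * ((∑ i, W i l a k * x i) + (∑ i, W i k a l * x i)) ^ 2 := by
        simp [Finset.sum_add_distrib]
    _ = ∑ j : Fin n, ∑ k : Fin n, ∑ l : Fin n,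
          2 * ((∑ i : Fin n, W i j k l * x i) + (∑ i : Fin n, W i l k j * x i)) ^ 2 := by
        rw [hzero, zero_add, hre]
    _ = 2 * ∑ j : Fin n, ∑ k : Fin n, ∑ l : Fin n,
          ((∑ i : Fin n, W i j k l * x i) + (∑ i : Fin n, W i l k j * x i)) ^ 2 := by
        simp [Finset.mul_sum]
end
end

section
/- Let n ≥ 5. For the function u_1(x) = (|x|²+1)^{-(n-4)/2} on ℝ^n, one has ‖Δu_1‖²_{L²(ℝ^n)} / ‖u_1‖²_{L^{2n/(n-4)}(ℝ^n)} = (n(n+2)(n-2)(n-4)/16) · 2^{4/n} π^{2(n+1)/n} / Γ((n+1)/2)^{4/n}. -/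
open MeasureTheory Real Set

noncomputable section

def innerD (n : ℕ) :
    EuclideanSpace ℝ (Fin n) →L[ℝ] (EuclideanSpace ℝ (Fin n) →L[ℝ] ℝ) := innerSL ℝ

lemma innerD_apply {n : ℕ} (x y : EuclideanSpace ℝ (Fin n)) :
    innerD n x y = inner ℝ x y := rfl

lemma sum_mul_self_eq {n : ℕ} (x : EuclideanSpace ℝ (Fin n)) :
    ∑ i, x i * x i = ‖x‖ ^ (2:ℕ) := by
  rw [EuclideanSpace.norm_eq, Real.sq_sqrt (by positivity)]
  simp [sq, Real.norm_eq_abs, abs_mul_abs_self]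

lemma vpos {n : ℕ} (x : EuclideanSpace ℝ (Fin n)) : (0:ℝ) < ‖x‖ ^ (2:ℕ) + 1 := by positivity

lemma hasFDerivAt_pow_aux {n : ℕ} (k b : ℝ) (y : EuclideanSpace ℝ (Fin n)) :
    HasFDerivAt (fun y : EuclideanSpace ℝ (Fin n) => k * (‖y‖ ^ (2:ℕ) + 1) ^ (-b))
      ((-2 * k * b * (‖y‖ ^ (2:ℕ) + 1) ^ (-b - 1)) • innerSL ℝ y) y := by
  have h1 : HasFDerivAt (fun y : EuclideanSpace ℝ (Fin n) => ‖y‖ ^ (2:ℕ) + 1)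
      ((2:ℕ) • innerSL ℝ y) y := ((hasStrictFDerivAt_norm_sq y).hasFDerivAt).add_const 1
  have h2 : HasDerivAt (fun t : ℝ => k * t ^ (-b)) (k * (-b * (‖y‖ ^ (2:ℕ) + 1) ^ (-b - 1)))
      (‖y‖ ^ (2:ℕ) + 1) :=
    (Real.hasDerivAt_rpow_const (Or.inl (vpos y).ne')).const_mul k
  have h3 := h2.comp_hasFDerivAt y h1
  have he : (k * (-b * (‖y‖ ^ (2:ℕ) + 1) ^ (-b - 1))) • (2:ℕ) • innerSL ℝ y
      = (-2 * k * b * (‖y‖ ^ (2:ℕ) + 1) ^ (-b - 1)) • innerSL ℝ y := by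
    rw [← Nat.cast_smul_eq_nsmul ℝ, smul_smul]
    congr 1
    push_cast; ring
  rw [he] at h3
  exact h3

lemma fderiv_u {n : ℕ} (a : ℝ) :
    (fderiv ℝ fun y : EuclideanSpace ℝ (Fin n) => (‖y‖ ^ (2:ℕ) + 1) ^ (-a))
      = fun y => (-2 * a * (‖y‖ ^ (2:ℕ) + 1) ^ (-(a+1))) • innerSL ℝ y := by
  funext y
  have h := hasFDerivAt_pow_aux (n := n) 1 a y
  simp only [one_mul, mul_one] at h
  have : (-2 * a * (‖y‖ ^ (2:ℕ) + 1) ^ (-a - 1)) = -2 * a * (‖y‖ ^ (2:ℕ) + 1) ^ (-(a+1)) := by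
    ring_nf
  rw [this] at h
  exact h.fderiv

lemma lap_u {n : ℕ} (a : ℝ) (x : EuclideanSpace ℝ (Fin n)) :
    lap n (fun y => (‖y‖ ^ (2:ℕ) + 1) ^ (-a)) x =
      4 * a * (a+1) * (‖x‖ ^ (2:ℕ) + 1) ^ (-(a+2)) * ‖x‖ ^ (2:ℕ)
        - 2 * a * n * (‖x‖ ^ (2:ℕ) + 1) ^ (-(a+1)) := by
  -- derivative of the coefficient function
  have hc : HasFDerivAt (fun y : EuclideanSpace ℝ (Fin n) => -2 * a * (‖y‖ ^ (2:ℕ) + 1) ^ (-(a+1)))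
      ((4 * a * (a+1) * (‖x‖ ^ (2:ℕ) + 1) ^ (-(a+1) - 1)) • innerSL ℝ x) x := by
    have h := hasFDerivAt_pow_aux (n := n) (-2*a) (a+1) x
    have : (-2 * (-2*a) * (a+1) * (‖x‖ ^ (2:ℕ) + 1) ^ (-(a+1) - 1))
        = 4 * a * (a+1) * (‖x‖ ^ (2:ℕ) + 1) ^ (-(a+1) - 1) := by ring
    rwa [this] at h
  have hD : HasFDerivAt (fun y : EuclideanSpace ℝ (Fin n) => innerSL ℝ y)
      (innerD n) x := (innerD n).hasFDerivAt
  have hF : HasFDerivAt (fderiv ℝ fun y : EuclideanSpace ℝ (Fin n) => (‖y‖ ^ (2:ℕ) + 1) ^ (-a))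
      (((-2 * a * (‖x‖ ^ (2:ℕ) + 1) ^ (-(a+1))) • innerD n)
        + (((4 * a * (a+1) * (‖x‖ ^ (2:ℕ) + 1) ^ (-(a+1) - 1)) • innerSL ℝ x).smulRight
            (innerSL ℝ x))) x := by
    rw [fderiv_u a]
    exact hc.smul hD
  -- now compute the sum
  unfold lap
  have key : ∀ i : Fin n,
      iteratedFDeriv ℝ 2 (fun y : EuclideanSpace ℝ (Fin n) => (‖y‖ ^ (2:ℕ) + 1) ^ (-a)) x
        ![EuclideanSpace.single i 1, EuclideanSpace.single i 1]
      = -2 * a * (‖x‖ ^ (2:ℕ) + 1) ^ (-(a+1)) * 1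
        + 4 * a * (a+1) * (‖x‖ ^ (2:ℕ) + 1) ^ (-(a+1) - 1) * (x i) * (x i) := by
    intro i
    rw [iteratedFDeriv_two_apply, hF.fderiv]
    simp [ContinuousLinearMap.smulRight_apply, real_inner_smul_left, innerD_apply,
      EuclideanSpace.inner_single_right, EuclideanSpace.inner_single_left,
      EuclideanSpace.single_apply]
    try ring
  rw [Finset.sum_congr rfl fun i _ => key i]
  rw [Finset.sum_add_distrib]
  simp only [Finset.sum_const, Finset.card_univ, Fintype.card_fin]
  have hx2 : ∑ i : Fin n, 4 * a * (a+1) * (‖x‖ ^ (2:ℕ) + 1) ^ (-(a+1) - 1) * (x i) * (x i)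
      = 4 * a * (a+1) * (‖x‖ ^ (2:ℕ) + 1) ^ (-(a+1) - 1) * ‖x‖ ^ (2:ℕ) := by
    rw [Finset.sum_congr rfl (fun i _ => by
      ring : ∀ i ∈ Finset.univ, 4 * a * (a+1) * (‖x‖ ^ (2:ℕ) + 1) ^ (-(a+1) - 1) * (x i) * (x i)
        = 4 * a * (a+1) * (‖x‖ ^ (2:ℕ) + 1) ^ (-(a+1) - 1) * (x i * x i)), ← Finset.mul_sum,
      sum_mul_self_eq]
  rw [hx2]
  have he : (-(a+1) - 1 : ℝ) = -(a+2) := by ring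
  rw [he, nsmul_eq_mul]
  ring


lemma real_beta (a b : ℝ) (ha : 0 < a) (hb : 0 < b) :
    ∫ x in Ioo (0:ℝ) 1, x ^ (a-1) * (1-x) ^ (b-1)
      = Real.Gamma a * Real.Gamma b / Real.Gamma (a+b) := by
  have hab : 0 < Real.Gamma (a+b) := Real.Gamma_pos_of_pos (by linarith)
  have hc := Complex.Gamma_mul_Gamma_eq_betaIntegral (s := (a:ℂ)) (t := (b:ℂ))
    (by simpa using ha) (by simpa using hb)
  have hbeta : Complex.betaIntegral (a:ℂ) (b:ℂ)
      = ((∫ x in Ioo (0:ℝ) 1, x ^ (a-1) * (1-x) ^ (b-1) : ℝ) : ℂ) := by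
    rw [Complex.betaIntegral, intervalIntegral.integral_of_le zero_le_one,
      integral_Ioc_eq_integral_Ioo]
    have hp : ∀ x ∈ Ioo (0:ℝ) 1, (x:ℂ) ^ ((a:ℂ)-1) * ((1:ℂ)-(x:ℂ)) ^ ((b:ℂ)-1)
        = ((x ^ (a-1) * (1-x) ^ (b-1) : ℝ) : ℂ) := by
      intro x hx
      obtain ⟨hx0, hx1⟩ := hx
      rw [Complex.ofReal_mul, Complex.ofReal_cpow hx0.le, Complex.ofReal_cpow (by linarith : (0:ℝ) ≤ 1 - x)]
      push_cast
      ring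
    rw [setIntegral_congr_fun measurableSet_Ioo hp]
    exact integral_ofReal
  rw [hbeta, ← Complex.ofReal_add, Complex.Gamma_ofReal, Complex.Gamma_ofReal,
    Complex.Gamma_ofReal, ← Complex.ofReal_mul, ← Complex.ofReal_mul] at hc
  have hc' : Real.Gamma a * Real.Gamma b
      = Real.Gamma (a+b) * ∫ x in Ioo (0:ℝ) 1, x ^ (a-1) * (1-x) ^ (b-1) := by
    exact_mod_cast hc
  rw [eq_div_iff hab.ne']
  linear_combination -hc'

lemma beta_Ioi (a b : ℝ) (ha : 0 < a) (hb : 0 < b) :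
    ∫ t in Ioi (0:ℝ), t ^ (a-1) * (1+t) ^ (-(a+b))
      = Real.Gamma a * Real.Gamma b / Real.Gamma (a+b) := by
  have himg : (fun x : ℝ => x / (1-x)) '' Ioo 0 1 = Ioi 0 := by
    ext y
    simp only [mem_image, mem_Ioi]
    constructor
    · rintro ⟨x, ⟨hx0, hx1⟩, rfl⟩
      exact div_pos hx0 (by linarith)
    · intro hy
      refine ⟨y / (1+y), ⟨div_pos hy (by linarith), ?_⟩, ?_⟩
      · rw [div_lt_one (by linarith)]; linarith
      · show (y/(1+y)) / (1 - y/(1+y)) = y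
        have h1 : (1:ℝ) - y/(1+y) = 1/(1+y) := by
          field_simp
          ring
        rw [h1]
        field_simp
  have hderiv : ∀ x ∈ Ioo (0:ℝ) 1, HasDerivWithinAt (fun x : ℝ => x / (1-x))
      ((1-x)⁻¹ ^ 2) (Ioo 0 1) x := by
    intro x hx
    have hne : (1:ℝ) - x ≠ 0 := by have h2 := hx.2; intro h; rw [sub_eq_zero] at h; linarith
    have h := (hasDerivAt_id x).div ((hasDerivAt_const x (1:ℝ)).sub (hasDerivAt_id x)) hne
    refine h.hasDerivWithinAt.congr_deriv ?_
    simp only [Pi.sub_apply, id_eq]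
    rw [div_eq_iff (pow_ne_zero 2 hne), inv_pow, inv_mul_cancel₀ (pow_ne_zero 2 hne)]
    ring
  have hinj : InjOn (fun x : ℝ => x / (1-x)) (Ioo 0 1) := by
    intro x hx y hy hxy
    have hnx : (1:ℝ) - x ≠ 0 := by have h2 := hx.2; intro h; rw [sub_eq_zero] at h; linarith
    have hny : (1:ℝ) - y ≠ 0 := by have h2 := hy.2; intro h; rw [sub_eq_zero] at h; linarith
    simp only at hxy
    field_simp at hxy
    linarith
  have hsub := integral_image_eq_integral_abs_deriv_smul measurableSet_Ioo hderiv hinj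
    (fun t => t ^ (a-1) * (1+t) ^ (-(a+b)))
  rw [himg] at hsub
  rw [hsub, ← real_beta a b ha hb]
  refine setIntegral_congr_fun measurableSet_Ioo (fun x hx => ?_)
  obtain ⟨hx0, hx1⟩ := hx
  have hu : (0:ℝ) < 1 - x := by linarith
  simp only [smul_eq_mul]
  have h1 : (1:ℝ) + x/(1-x) = (1-x)⁻¹ := by
    rw [inv_eq_one_div]
    field_simp
    ring
  rw [abs_of_nonneg (by positivity : (0:ℝ) ≤ (1-x)⁻¹ ^ 2), h1, Real.div_rpow hx0.le hu.le,
    Real.inv_rpow hu.le, ← Real.rpow_neg hu.le, neg_neg, inv_pow, ← Real.rpow_natCast (1-x) 2]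
  have e1 : ((1-x) ^ (a-1))⁻¹ = (1-x) ^ (-(a-1)) := (Real.rpow_neg hu.le _).symm
  have e2 : ((1-x) ^ (((2:ℕ):ℝ)))⁻¹ = (1-x) ^ (-((2:ℕ):ℝ)) := (Real.rpow_neg hu.le _).symm
  rw [div_eq_mul_inv, e1, e2]
  rw [show (1-x) ^ (-((2:ℕ):ℝ)) * (x ^ (a-1) * (1-x) ^ (-(a-1)) * (1-x) ^ (a+b))
      = x ^ (a-1) * ((1-x) ^ (-((2:ℕ):ℝ)) * ((1-x) ^ (-(a-1)) * (1-x) ^ (a+b))) from by ring,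
    ← Real.rpow_add hu, ← Real.rpow_add hu]
  congr 1
  push_cast
  ring


lemma radial (n : ℕ) (hn : 1 ≤ n) (s : ℝ) (hs : (n:ℝ)/2 < s) :
    ∫ y in Ioi (0:ℝ), y ^ (n-1 : ℕ) * ((y ^ (2:ℕ) + 1) ^ (-s))
      = Real.Gamma ((n:ℝ)/2) * Real.Gamma (s - (n:ℝ)/2) / (2 * Real.Gamma s) := by
  have hnpos : (0:ℝ) < (n:ℝ)/2 := by positivity
  have h2 := integral_comp_rpow_Ioi_of_pos
    (g := fun t : ℝ => t ^ ((n:ℝ)/2 - 1) * (1+t) ^ (-s)) (p := 2) two_pos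
  have hb := beta_Ioi ((n:ℝ)/2) (s - (n:ℝ)/2) hnpos (by linarith)
  rw [show (n:ℝ)/2 + (s - (n:ℝ)/2) = s from by ring] at hb
  rw [hb] at h2
  have hcong : ∀ x ∈ Ioi (0:ℝ),
      (2 * x ^ ((2:ℝ)-1)) • ((x ^ (2:ℝ)) ^ ((n:ℝ)/2 - 1) * (1 + x ^ (2:ℝ)) ^ (-s))
        = 2 * (x ^ (n-1 : ℕ) * ((x ^ (2:ℕ) + 1) ^ (-s))) := by
    intro x hx
    have hx0 : (0:ℝ) < x := hx
    have e0 : x ^ ((2:ℝ)-1) = x := by norm_num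
    have e1 : (x ^ (2:ℝ)) ^ ((n:ℝ)/2 - 1) = x ^ (2 * ((n:ℝ)/2 - 1)) := by
      rw [← Real.rpow_mul hx0.le]
    have e2 : x ^ (2:ℝ) = x ^ (2:ℕ) := by
      rw [← Real.rpow_natCast x 2]; norm_num
    have e3 : (x:ℝ) ^ (n-1 : ℕ) = x ^ (((n:ℝ)) - 1) := by
      rw [← Real.rpow_natCast x (n-1), Nat.cast_sub hn, Nat.cast_one]
    rw [e0, e1, e2, e3, smul_eq_mul, add_comm (1:ℝ),
      show (2 * ((n:ℝ)/2 - 1)) = (n:ℝ) - 2 from by ring,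
      show ((n:ℝ) - 1) = 1 + ((n:ℝ) - 2) from by ring,
      Real.rpow_add hx0 1, Real.rpow_one]
    ring
  rw [setIntegral_congr_fun measurableSet_Ioi hcong, integral_const_mul] at h2
  have hspos : (0:ℝ) < s := lt_of_le_of_lt (by positivity : (0:ℝ) ≤ (n:ℝ)/2) hs
  have hΓs : Real.Gamma s ≠ 0 := (Real.Gamma_pos_of_pos hspos).ne'
  rw [eq_div_iff hΓs] at h2
  have h2Γ : (0:ℝ) < 2 * Real.Gamma s := by
    have := Real.Gamma_pos_of_pos hspos
    linarith
  rw [eq_div_iff h2Γ.ne']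
  linear_combination h2

lemma integral_K (n : ℕ) (hn : 1 ≤ n) (s : ℝ) (hs : (n:ℝ)/2 < s) :
    ∫ x : EuclideanSpace ℝ (Fin n), (‖x‖ ^ (2:ℕ) + 1) ^ (-s)
      = π ^ ((n:ℝ)/2) * Real.Gamma (s - (n:ℝ)/2) / Real.Gamma s := by
  haveI : Nonempty (Fin n) := Fin.pos_iff_nonempty.mp (by omega)
  haveI : Nontrivial (EuclideanSpace ℝ (Fin n)) :=
    Module.nontrivial_of_finrank_pos (R := ℝ) (by rw [finrank_euclideanSpace_fin]; omega)
  have h0 := MeasureTheory.integral_fun_norm_addHaar (volume : Measure (EuclideanSpace ℝ (Fin n)))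
    (fun r : ℝ => (r ^ (2:ℕ) + 1) ^ (-s))
  simp only [finrank_euclideanSpace_fin, smul_eq_mul, nsmul_eq_mul] at h0
  have hnpos : (0:ℝ) < (n:ℝ)/2 := by positivity
  have hΓhalf : (0:ℝ) < Real.Gamma ((n:ℝ)/2) := Real.Gamma_pos_of_pos hnpos
  have hΓone : (0:ℝ) < Real.Gamma ((n:ℝ)/2 + 1) := Real.Gamma_pos_of_pos (by linarith)
  have hvol : (volume (Metric.ball (0:EuclideanSpace ℝ (Fin n)) 1)).toReal
      = √π ^ n / Real.Gamma ((n:ℝ)/2 + 1) := by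
    rw [EuclideanSpace.volume_ball]
    simp only [Fintype.card_fin, ENNReal.ofReal_one, one_pow, one_mul]
    rw [ENNReal.toReal_ofReal (by positivity)]
  rw [measureReal_def, hvol, radial n hn s hs] at h0
  rw [h0]
  have hsqrt : (√π : ℝ) ^ n = π ^ ((n:ℝ)/2) := by
    rw [Real.sqrt_eq_rpow, ← Real.rpow_natCast (π ^ ((1:ℝ)/2)) n, ← Real.rpow_mul pi_pos.le]
    congr 1
    ring
  rw [hsqrt, Real.Gamma_add_one hnpos.ne']
  have hΓs : (0:ℝ) < Real.Gamma s :=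
    Real.Gamma_pos_of_pos (lt_of_le_of_lt (by positivity : (0:ℝ) ≤ (n:ℝ)/2) hs)
  have hn0 : ((n:ℝ)) ≠ 0 := by positivity
  field_simp

lemma integrable_K (n : ℕ) (s : ℝ) (hs : (n:ℝ) < 2*s) :
    Integrable (fun x : EuclideanSpace ℝ (Fin n) => (‖x‖ ^ (2:ℕ) + 1) ^ (-s)) := by
  have h := integrable_rpow_neg_one_add_norm_sq (E := EuclideanSpace ℝ (Fin n))
    (μ := volume) (r := 2*s) (by rw [finrank_euclideanSpace_fin]; exact hs)
  exact h.congr (Filter.Eventually.of_forall fun x => by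
    simp only []
    rw [add_comm (1:ℝ)]
    congr 1
    ring)

lemma numerand (n : ℕ) (hn : 5 ≤ n) (x : EuclideanSpace ℝ (Fin n)) :
    (lap n (fun y => (‖y‖ ^ (2:ℕ) + 1) ^ (-(((n:ℝ) - 4) / 2))) x) ^ (2:ℕ)
      = 4*((n:ℝ)-4)^2 * (‖x‖ ^ (2:ℕ) + 1) ^ (-((n:ℝ)-2))
        + 4*((n:ℝ)-4)^2*((n:ℝ)-2) * (‖x‖ ^ (2:ℕ) + 1) ^ (-((n:ℝ)-1))
        + ((n:ℝ)-4)^2*((n:ℝ)-2)^2 * (‖x‖ ^ (2:ℕ) + 1) ^ (-(n:ℝ)) := by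
  rw [lap_u]
  set a : ℝ := ((n:ℝ) - 4) / 2 with ha
  set v : ℝ := ‖x‖ ^ (2:ℕ) + 1 with hvdef
  have hv : (0:ℝ) < v := by positivity
  have hnorm : (‖x‖ ^ (2:ℕ) : ℝ) = v - 1 := by rw [hvdef]; ring
  have h1 : v ^ (-(a+2)) * v = v ^ (-(a+1)) := by
    have h := Real.rpow_add hv (-(a+2)) 1
    rw [Real.rpow_one] at h
    rw [show -(a+1) = -(a+2) + 1 from by ring, h]
  have h2 : v ^ (-(a+1)) * v ^ (-(a+1)) = v ^ (-((n:ℝ)-2)) := by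
    rw [← Real.rpow_add hv]; congr 1; rw [ha]; ring
  have h3 : v ^ (-(a+1)) * v ^ (-(a+2)) = v ^ (-((n:ℝ)-1)) := by
    rw [← Real.rpow_add hv]; congr 1; rw [ha]; ring
  have h4 : v ^ (-(a+2)) * v ^ (-(a+2)) = v ^ (-(n:ℝ)) := by
    rw [← Real.rpow_add hv]; congr 1; rw [ha]; ring
  rw [hnorm, ha]
  set u := v ^ (-(a+2)) with hu
  set w := v ^ (-(a+1)) with hw
  set P1 := v ^ (-((n:ℝ)-2))
  set P2 := v ^ (-((n:ℝ)-1))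
  set P3 := v ^ (-(n:ℝ))
  have hc : (4 * a * (a+1) : ℝ) = ((n:ℝ)-4)*((n:ℝ)-2) := by rw [ha]; ring
  have hd : (2 * a * (n:ℝ) : ℝ) = ((n:ℝ)-4)*(n:ℝ) := by rw [ha]; ring
  set c : ℝ := ((n:ℝ)-4)*((n:ℝ)-2)
  set d : ℝ := ((n:ℝ)-4)*(n:ℝ)
  rw [ha] at hc hd
  rw [hc, hd]
  linear_combination (c^2*(u*v + w) - 2*c^2*u - 2*c*d*w) * h1 + (c-d)^2 * h2
    + (2*c*d - 2*c^2) * h3 + c^2 * h4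

set_option maxHeartbeats 1000000 in
/-- Let `n ≥ 5`. For `u₁(x) = (|x|²+1)^{-(n-4)/2}` on `ℝ^n`,
`‖Δu₁‖²_{L²} / ‖u₁‖²_{L^{2n/(n-4)}} = (n(n+2)(n-2)(n-4)/16) · 2^{4/n} π^{2(n+1)/n} / Γ((n+1)/2)^{4/n}`,
where `‖u₁‖²_{L^{2n/(n-4)}} = (∫ u₁^{2n/(n-4)})^{(n-4)/n}`. -/
theorem stmt17 (n : ℕ) (hn : 5 ≤ n) :
    (∫ x : EuclideanSpace ℝ (Fin n),
        (lap n (fun y => (‖y‖ ^ (2 : ℕ) + 1) ^ (-(((n : ℝ) - 4) / 2))) x) ^ (2 : ℕ)) /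
      (∫ x : EuclideanSpace ℝ (Fin n),
          ((‖x‖ ^ (2 : ℕ) + 1) ^ (-(((n : ℝ) - 4) / 2))) ^ (2 * (n : ℝ) / ((n : ℝ) - 4))) ^
        (((n : ℝ) - 4) / (n : ℝ)) =
      ((n : ℝ) * ((n : ℝ) + 2) * ((n : ℝ) - 2) * ((n : ℝ) - 4) / 16) *
        (2 : ℝ) ^ (4 / (n : ℝ)) * π ^ (2 * ((n : ℝ) + 1) / (n : ℝ)) /
          Real.Gamma (((n : ℝ) + 1) / 2) ^ (4 / (n : ℝ)) := by
  have h5 : (5:ℝ) ≤ (n:ℝ) := by exact_mod_cast hn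
  have h4 : ((n:ℝ) - 4) ≠ 0 := by linarith
  have hn0 : ((n:ℝ)) ≠ 0 := by linarith
  have hn1 : 1 ≤ n := by omega
  -- integrability
  have i1 : Integrable (fun x : EuclideanSpace ℝ (Fin n) => (‖x‖ ^ (2:ℕ) + 1) ^ (-((n:ℝ)-2))) :=
    integrable_K n ((n:ℝ)-2) (by linarith)
  have i2 : Integrable (fun x : EuclideanSpace ℝ (Fin n) => (‖x‖ ^ (2:ℕ) + 1) ^ (-((n:ℝ)-1))) :=
    integrable_K n ((n:ℝ)-1) (by linarith)
  have i3 : Integrable (fun x : EuclideanSpace ℝ (Fin n) => (‖x‖ ^ (2:ℕ) + 1) ^ (-(n:ℝ))) :=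
    integrable_K n (n:ℝ) (by linarith)
  -- numerator
  have iA : Integrable (fun x : EuclideanSpace ℝ (Fin n) =>
      4*((n:ℝ)-4)^2 * (‖x‖ ^ (2:ℕ) + 1) ^ (-((n:ℝ)-2))
        + 4*((n:ℝ)-4)^2*((n:ℝ)-2) * (‖x‖ ^ (2:ℕ) + 1) ^ (-((n:ℝ)-1))) := by
    exact (i1.const_mul _).add (i2.const_mul _)
  have hnum : (∫ x : EuclideanSpace ℝ (Fin n),
        (lap n (fun y => (‖y‖ ^ (2 : ℕ) + 1) ^ (-(((n : ℝ) - 4) / 2))) x) ^ (2 : ℕ))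
      = 4*((n:ℝ)-4)^2 * (∫ x : EuclideanSpace ℝ (Fin n), (‖x‖ ^ (2:ℕ) + 1) ^ (-((n:ℝ)-2)))
        + 4*((n:ℝ)-4)^2*((n:ℝ)-2) * (∫ x : EuclideanSpace ℝ (Fin n), (‖x‖ ^ (2:ℕ) + 1) ^ (-((n:ℝ)-1)))
        + ((n:ℝ)-4)^2*((n:ℝ)-2)^2 * (∫ x : EuclideanSpace ℝ (Fin n), (‖x‖ ^ (2:ℕ) + 1) ^ (-(n:ℝ))) := by
    rw [integral_congr_ae (Filter.Eventually.of_forall (numerand n hn))]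
    rw [integral_add iA (i3.const_mul (((n:ℝ)-4)^2*((n:ℝ)-2)^2)),
      integral_add (i1.const_mul (4*((n:ℝ)-4)^2)) (i2.const_mul (4*((n:ℝ)-4)^2*((n:ℝ)-2))),
      integral_const_mul, integral_const_mul, integral_const_mul]
  -- denominator
  have hden : (∫ x : EuclideanSpace ℝ (Fin n),
        ((‖x‖ ^ (2 : ℕ) + 1) ^ (-(((n : ℝ) - 4) / 2))) ^ (2 * (n : ℝ) / ((n : ℝ) - 4)))
      = ∫ x : EuclideanSpace ℝ (Fin n), (‖x‖ ^ (2:ℕ) + 1) ^ (-(n:ℝ)) := by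
    refine integral_congr_ae (Filter.Eventually.of_forall fun x => ?_)
    show ((‖x‖ ^ (2:ℕ) + 1) ^ (-(((n:ℝ)-4)/2))) ^ (2 * (n:ℝ) / ((n:ℝ)-4))
        = (‖x‖ ^ (2:ℕ) + 1) ^ (-(n:ℝ))
    rw [← Real.rpow_mul (vpos x).le]
    congr 1
    field_simp
  rw [hnum, hden]
  -- evaluate the three integrals
  rw [integral_K n hn1 ((n:ℝ)-2) (by linarith), integral_K n hn1 ((n:ℝ)-1) (by linarith),
    integral_K n hn1 (n:ℝ) (by linarith)]
  have ea : ((n:ℝ)-2) - (n:ℝ)/2 = (n:ℝ)/2 - 2 := by ring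
  have eb : ((n:ℝ)-1) - (n:ℝ)/2 = (n:ℝ)/2 - 1 := by ring
  have ec : (n:ℝ) - (n:ℝ)/2 = (n:ℝ)/2 := by ring
  rw [ea, eb, ec]
  -- Gamma bookkeeping
  have hne2 : ((n:ℝ)/2 - 2) ≠ 0 := by intro h; nlinarith
  have hne1 : ((n:ℝ)/2 - 1) ≠ 0 := by intro h; nlinarith
  have hGHpos : (0:ℝ) < Real.Gamma ((n:ℝ)/2 - 2) := Real.Gamma_pos_of_pos (by linarith)
  have hHHpos : (0:ℝ) < Real.Gamma ((n:ℝ) - 2) := Real.Gamma_pos_of_pos (by linarith)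
  have hGhalf : (0:ℝ) < Real.Gamma (((n:ℝ)+1)/2) := Real.Gamma_pos_of_pos (by linarith)
  have hΓnpos : (0:ℝ) < Real.Gamma (n:ℝ) := Real.Gamma_pos_of_pos (by linarith)
  have e1 : Real.Gamma ((n:ℝ)/2 - 1) = ((n:ℝ)/2 - 2) * Real.Gamma ((n:ℝ)/2 - 2) := by
    have h := Real.Gamma_add_one hne2
    rw [show ((n:ℝ)/2 - 2) + 1 = (n:ℝ)/2 - 1 from by ring] at h
    exact h
  have e2 : Real.Gamma ((n:ℝ)/2) = ((n:ℝ)/2 - 1) * Real.Gamma ((n:ℝ)/2 - 1) := by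
    have h := Real.Gamma_add_one hne1
    rw [show ((n:ℝ)/2 - 1) + 1 = (n:ℝ)/2 from by ring] at h
    exact h
  have e3 : Real.Gamma ((n:ℝ) - 1) = ((n:ℝ) - 2) * Real.Gamma ((n:ℝ) - 2) := by
    have h := Real.Gamma_add_one (show ((n:ℝ) - 2) ≠ 0 by intro h; nlinarith)
    rw [show ((n:ℝ) - 2) + 1 = (n:ℝ) - 1 from by ring] at h
    exact h
  have e4' : Real.Gamma (n:ℝ) = ((n:ℝ) - 1) * Real.Gamma ((n:ℝ) - 1) := by
    have h := Real.Gamma_add_one (show ((n:ℝ) - 1) ≠ 0 by intro h; nlinarith)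
    rw [show ((n:ℝ) - 1) + 1 = (n:ℝ) from by ring] at h
    exact h
  -- duplication formula
  have hdup := Real.Gamma_mul_Gamma_add_half ((n:ℝ)/2)
  rw [show (n:ℝ)/2 + 1/2 = ((n:ℝ)+1)/2 from by ring,
    show 2*((n:ℝ)/2) = (n:ℝ) from by ring] at hdup
  have hps : π ^ ((n:ℝ)/2) * √π = π ^ (((n:ℝ)+1)/2) := by
    rw [Real.sqrt_eq_rpow, ← Real.rpow_add pi_pos]
    congr 1
    ring
  rw [e2, e1, e3, e4']
  rw [e3]
  have hn1' : ((n:ℝ) - 1) ≠ 0 := by intro h; nlinarith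
  have hn2' : ((n:ℝ) - 2) ≠ 0 := by intro h; nlinarith
  have hPpos : (0:ℝ) < π ^ ((n:ℝ)/2) := Real.rpow_pos_of_pos pi_pos _
  -- value of K(n)
  have hKval : π ^ ((n:ℝ)/2) * (((n:ℝ)/2 - 1) * (((n:ℝ)/2 - 2) * Real.Gamma ((n:ℝ)/2 - 2)))
        / (((n:ℝ) - 1) * (((n:ℝ) - 2) * Real.Gamma ((n:ℝ) - 2)))
      = 2 ^ ((1:ℝ) - (n:ℝ)) * π ^ (((n:ℝ)+1)/2) / Real.Gamma (((n:ℝ)+1)/2) := by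
    rw [← e1, ← e2, ← e3, ← e4']
    rw [div_eq_div_iff hΓnpos.ne' hGhalf.ne']
    linear_combination π ^ ((n:ℝ)/2) * hdup
      + (2:ℝ) ^ ((1:ℝ)-(n:ℝ)) * Real.Gamma (n:ℝ) * hps
  -- reduce numerator to multiple of K(n)
  have hNM : 4*((n:ℝ)-4)^2 * (π ^ ((n:ℝ)/2) * Real.Gamma ((n:ℝ)/2 - 2) / Real.Gamma ((n:ℝ)-2))
        + 4*((n:ℝ)-4)^2*((n:ℝ)-2) * (π ^ ((n:ℝ)/2) * (((n:ℝ)/2 - 2) * Real.Gamma ((n:ℝ)/2 - 2))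
            / (((n:ℝ) - 2) * Real.Gamma ((n:ℝ)-2)))
        + ((n:ℝ)-4)^2*((n:ℝ)-2)^2 * (π ^ ((n:ℝ)/2)
            * (((n:ℝ)/2 - 1) * (((n:ℝ)/2 - 2) * Real.Gamma ((n:ℝ)/2 - 2)))
            / (((n:ℝ) - 1) * (((n:ℝ) - 2) * Real.Gamma ((n:ℝ)-2))))
      = ((n:ℝ) * ((n:ℝ) + 2) * ((n:ℝ) - 2) * ((n:ℝ) - 4))
          * (π ^ ((n:ℝ)/2) * (((n:ℝ)/2 - 1) * (((n:ℝ)/2 - 2) * Real.Gamma ((n:ℝ)/2 - 2)))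
            / (((n:ℝ) - 1) * (((n:ℝ) - 2) * Real.Gamma ((n:ℝ)-2)))) := by
    field_simp
    ring
  rw [hNM]
  -- divide
  have hKpos : (0:ℝ) < π ^ ((n:ℝ)/2) * (((n:ℝ)/2 - 1) * (((n:ℝ)/2 - 2) * Real.Gamma ((n:ℝ)/2 - 2)))
      / (((n:ℝ) - 1) * (((n:ℝ) - 2) * Real.Gamma ((n:ℝ)-2))) := by
    apply div_pos
    · apply mul_pos hPpos
      apply mul_pos (by linarith) (mul_pos (by linarith) hGHpos)
    · apply mul_pos (by linarith) (mul_pos (by linarith) hHHpos)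
  rw [mul_div_assoc]
  have hstep : (π ^ ((n:ℝ)/2) * (((n:ℝ)/2 - 1) * (((n:ℝ)/2 - 2) * Real.Gamma ((n:ℝ)/2 - 2)))
        / (((n:ℝ) - 1) * (((n:ℝ) - 2) * Real.Gamma ((n:ℝ)-2))))
        / (π ^ ((n:ℝ)/2) * (((n:ℝ)/2 - 1) * (((n:ℝ)/2 - 2) * Real.Gamma ((n:ℝ)/2 - 2)))
        / (((n:ℝ) - 1) * (((n:ℝ) - 2) * Real.Gamma ((n:ℝ)-2))))
          ^ (((n:ℝ)-4)/(n:ℝ))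
      = (2 ^ ((1:ℝ) - (n:ℝ)) * π ^ (((n:ℝ)+1)/2) / Real.Gamma (((n:ℝ)+1)/2)) ^ ((4:ℝ)/(n:ℝ)) := by
    have h := Real.rpow_sub hKpos 1 (((n:ℝ)-4)/(n:ℝ))
    rw [Real.rpow_one] at h
    rw [← h, show (1:ℝ) - ((n:ℝ)-4)/(n:ℝ) = (4:ℝ)/(n:ℝ) from by field_simp; ring, hKval]
  rw [hstep]
  -- expand the rpow
  have h2pos : (0:ℝ) < (2:ℝ) ^ ((1:ℝ) - (n:ℝ)) := Real.rpow_pos_of_pos two_pos _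
  have hπpos : (0:ℝ) < π ^ (((n:ℝ)+1)/2) := Real.rpow_pos_of_pos pi_pos _
  rw [Real.div_rpow (by positivity) hGhalf.le, Real.mul_rpow h2pos.le hπpos.le,
    ← Real.rpow_mul (by norm_num : (0:ℝ) ≤ 2), ← Real.rpow_mul pi_pos.le]
  rw [show ((1:ℝ) - (n:ℝ)) * ((4:ℝ)/(n:ℝ)) = (4:ℝ)/(n:ℝ) - 4 from by field_simp,
    show (((n:ℝ)+1)/2) * ((4:ℝ)/(n:ℝ)) = 2 * ((n:ℝ)+1) / (n:ℝ) from by field_simp; ring]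
  rw [Real.rpow_sub two_pos, show (2:ℝ) ^ (4:ℝ) = 16 from by
    rw [show (4:ℝ) = ((4:ℕ):ℝ) from by norm_num, Real.rpow_natCast]
    norm_num]
  have hGGr : (0:ℝ) < Real.Gamma (((n:ℝ)+1)/2) ^ ((4:ℝ)/(n:ℝ)) := Real.rpow_pos_of_pos hGhalf _
  field_simp
end
end
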